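/- Pointwise bound on the Gaussian beam residual. Let N ≥ 1 be an integer, set ℓ = ⌈N/2⌉ − 1, let Ω ⊆ ℝ^d, let γ : Ω → ℝ^d, let c > 0, and let φ⁺, φ⁻ : Ω → ℂ satisfy Im φ^±(x) ≥ c|x − γ(x)|² for all x ∈ Ω. Let c_j^± : Ω → ℂ for j = −2, …, ℓ satisfy |c_j^±(x)| ≤ C_j |x − γ(x)|^{N − 2j − 2} for j = −2, …, ℓ − 1 and |c_ℓ^±(x)| ≤ C_ℓ on Ω. Then there is a constant C depending only on N, c and the C_j such that for all k ≥ 1 and all x ∈ Ω: |e^{i k φ⁺(x)} Σ_{j=−2}^{ℓ} c_j^+(x) k^{−j} + e^{i k φ⁻(x)} Σ_{j=−2}^{ℓ} c_j^-(x) k^{−j}| ≤ C e^{−k c |x − γ(x)|²/2} k^{−N/2 + 1}. -/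

import Mathlib

lemma pow_le_factorial_mul_exp' (p : ℕ) {u : ℝ} (hu : 0 ≤ u) :
    u ^ p ≤ p.factorial * Real.exp u := by
  have h := Real.sum_le_exp_of_nonneg hu (p + 1)
  have h2 : u ^ p / p.factorial ≤ ∑ i ∈ Finset.range (p + 1), u ^ i / i.factorial :=
    Finset.single_le_sum (f := fun i => u ^ i / (i.factorial : ℝ))
      (fun i _ => by positivity) (by simp)
  have hp : (0 : ℝ) < p.factorial := by positivity
  have h3 := h2.trans h
  calc u ^ p = (u ^ p / p.factorial) * p.factorial := by field_simp
    _ ≤ Real.exp u * p.factorial := by gcongr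
    _ = p.factorial * Real.exp u := by ring

lemma gauss_aux' (p : ℕ) {u : ℝ} (hu : 0 ≤ u) :
    u ^ p * Real.exp (-(u ^ 2) / 2) ≤ p.factorial * Real.exp (1 / 2) := by
  have h1 := pow_le_factorial_mul_exp' p hu
  have h3 : u - u ^ 2 / 2 ≤ 1 / 2 := by nlinarith [sq_nonneg (u - 1)]
  calc u ^ p * Real.exp (-(u ^ 2) / 2)
      ≤ (p.factorial * Real.exp u) * Real.exp (-(u ^ 2) / 2) := by gcongr
    _ = p.factorial * Real.exp (u - u ^ 2 / 2) := by
        rw [mul_assoc, ← Real.exp_add]; ring_nf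
    _ ≤ p.factorial * Real.exp (1 / 2) := by
        have := Real.exp_le_exp.2 h3
        gcongr

lemma gauss_decay' (p : ℕ) {a s : ℝ} (ha : 0 < a) (hs : 0 ≤ s) :
    s ^ p * Real.exp (-(a * s ^ 2) / 2) ≤
      p.factorial * Real.exp (1 / 2) * a ^ (-(p : ℝ) / 2) := by
  set u := s * Real.sqrt a with hu
  have hsa : 0 < Real.sqrt a := Real.sqrt_pos.2 ha
  have hu0 : 0 ≤ u := by positivity
  have hu2 : u ^ 2 = a * s ^ 2 := by
    rw [hu, mul_pow, Real.sq_sqrt ha.le]; ring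
  have hap : (Real.sqrt a) ^ p = a ^ ((p : ℝ) / 2) := by
    rw [Real.sqrt_eq_rpow, ← Real.rpow_natCast (a ^ (1 / 2 : ℝ)) p, ← Real.rpow_mul ha.le]
    ring_nf
  have hsp : s ^ p = u ^ p * a ^ (-(p : ℝ) / 2) := by
    rw [hu, mul_pow, hap, mul_assoc, ← Real.rpow_add ha,
      show (p : ℝ) / 2 + -(p : ℝ) / 2 = 0 by ring, Real.rpow_zero, mul_one]
  have hkey := gauss_aux' p hu0
  have hpos : (0:ℝ) < a ^ (-(p : ℝ) / 2) := Real.rpow_pos_of_pos ha _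
  calc s ^ p * Real.exp (-(a * s ^ 2) / 2)
      = (u ^ p * Real.exp (-(u ^ 2) / 2)) * a ^ (-(p : ℝ) / 2) := by
        rw [hsp, hu2]; ring
    _ ≤ (p.factorial * Real.exp (1 / 2)) * a ^ (-(p : ℝ) / 2) := by gcongr
    _ = p.factorial * Real.exp (1 / 2) * a ^ (-(p : ℝ) / 2) := by ring

lemma gauss_decay_full (p : ℕ) {a s : ℝ} (ha : 0 < a) (hs : 0 ≤ s) :
    s ^ p * Real.exp (-(a * s ^ 2)) ≤
      p.factorial * Real.exp (1 / 2) * a ^ (-(p : ℝ) / 2) * Real.exp (-(a * s ^ 2) / 2) := by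
  have h : Real.exp (-(a * s ^ 2)) =
      Real.exp (-(a * s ^ 2) / 2) * Real.exp (-(a * s ^ 2) / 2) := by
    rw [← Real.exp_add]; ring_nf
  calc s ^ p * Real.exp (-(a * s ^ 2))
      = (s ^ p * Real.exp (-(a * s ^ 2) / 2)) * Real.exp (-(a * s ^ 2) / 2) := by
        rw [h]; ring
    _ ≤ (p.factorial * Real.exp (1 / 2) * a ^ (-(p : ℝ) / 2)) * Real.exp (-(a * s ^ 2) / 2) :=
        mul_le_mul_of_nonneg_right (gauss_decay' p ha hs) (Real.exp_pos _).le

/-- Pointwise bound on the Gaussian beam residual for an `N`-th order beam. -/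
theorem gaussian_beam_residual_pointwise_bound
    {d : ℕ} (N : ℕ) (hN : 1 ≤ N) (ℓ : ℤ) (hℓ : ℓ = ⌈(N : ℚ) / 2⌉ - 1)
    (Ω : Set (EuclideanSpace ℝ (Fin d)))
    (γ : EuclideanSpace ℝ (Fin d) → EuclideanSpace ℝ (Fin d))
    (c : ℝ) (hc : 0 < c)
    (φp φm : EuclideanSpace ℝ (Fin d) → ℂ)
    (hφp : ∀ x ∈ Ω, c * ‖x - γ x‖ ^ 2 ≤ (φp x).im)
    (hφm : ∀ x ∈ Ω, c * ‖x - γ x‖ ^ 2 ≤ (φm x).im)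
    (cp cm : ℤ → EuclideanSpace ℝ (Fin d) → ℂ)
    (Cc : ℤ → ℝ)
    (hcp : ∀ j ∈ Finset.Icc (-2 : ℤ) (ℓ - 1), ∀ x ∈ Ω,
      ‖cp j x‖ ≤ Cc j * ‖x - γ x‖ ^ ((N : ℤ) - 2 * j - 2))
    (hcm : ∀ j ∈ Finset.Icc (-2 : ℤ) (ℓ - 1), ∀ x ∈ Ω,
      ‖cm j x‖ ≤ Cc j * ‖x - γ x‖ ^ ((N : ℤ) - 2 * j - 2))
    (hcpl : ∀ x ∈ Ω, ‖cp ℓ x‖ ≤ Cc ℓ)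
    (hcml : ∀ x ∈ Ω, ‖cm ℓ x‖ ≤ Cc ℓ) :
    ∃ C : ℝ, ∀ k : ℝ, 1 ≤ k → ∀ x ∈ Ω,
      ‖Complex.exp (Complex.I * k * φp x) * ∑ j ∈ Finset.Icc (-2 : ℤ) ℓ, cp j x * (k : ℂ) ^ (-j)
            + Complex.exp (Complex.I * k * φm x) * ∑ j ∈ Finset.Icc (-2 : ℤ) ℓ, cm j x * (k : ℂ) ^ (-j)‖
        ≤ C * Real.exp (-k * c * ‖x - γ x‖ ^ 2 / 2) * k ^ (-(N : ℝ) / 2 + 1) := by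
  -- integer facts about ℓ
  have hm1 : (N : ℤ) ≤ 2 * (ℓ + 1) := by
    have h := Int.le_ceil ((N : ℚ) / 2)
    have h' : (N : ℚ) ≤ 2 * ((ℓ : ℚ) + 1) := by
      have : ((ℓ : ℚ)) = ((⌈(N : ℚ) / 2⌉ : ℤ) : ℚ) - 1 := by exact_mod_cast congrArg (fun z : ℤ => (z : ℚ)) hℓ
      rw [this]; push_cast at h ⊢; linarith
    exact_mod_cast h'
  have hm2 : 2 * (ℓ + 1) ≤ (N : ℤ) + 1 := by
    have h := Int.ceil_lt_add_one ((N : ℚ) / 2)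
    have h' : 2 * ((ℓ : ℚ) + 1) < (N : ℚ) + 2 := by
      have : ((ℓ : ℚ)) = ((⌈(N : ℚ) / 2⌉ : ℤ) : ℚ) - 1 := by exact_mod_cast congrArg (fun z : ℤ => (z : ℚ)) hℓ
      rw [this]; push_cast at h ⊢; linarith
    have h'' : 2 * (ℓ + 1) < (N : ℤ) + 2 := by exact_mod_cast h'
    omega
  -- the constants
  set D : ℤ → ℝ := fun j =>
    |Cc j| * (((((N : ℤ) - 2 * j - 2).toNat.factorial : ℝ)) * Real.exp (1 / 2)
      * c ^ (-((((N : ℤ) - 2 * j - 2).toNat : ℕ) : ℝ) / 2) + 1) with hD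
  have hD0 : ∀ j, 0 ≤ D j := by
    intro j
    apply mul_nonneg (abs_nonneg _)
    have := Real.rpow_pos_of_pos hc (-((((N : ℤ) - 2 * j - 2).toNat : ℕ) : ℝ) / 2)
    positivity
  refine ⟨2 * ∑ j ∈ Finset.Icc (-2 : ℤ) ℓ, D j, ?_⟩
  intro k hk x hx
  have hk0 : (0 : ℝ) < k := lt_of_lt_of_le one_pos hk
  set r := ‖x - γ x‖ with hr
  have hr0 : 0 ≤ r := norm_nonneg _
  set E := Real.exp (-(k * c * r ^ 2) / 2) with hE
  set K := k ^ (-(N : ℝ) / 2 + 1) with hK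
  have hE0 : (0 : ℝ) < E := Real.exp_pos _
  have hK0 : (0 : ℝ) < K := Real.rpow_pos_of_pos hk0 _
  have hkcr : 0 ≤ k * c * r ^ 2 := by positivity
  -- key per-term bound
  have key : ∀ j ∈ Finset.Icc (-2 : ℤ) ℓ, ∀ b : ℝ, 0 ≤ b →
      (j ≤ ℓ - 1 → b ≤ Cc j * r ^ ((N : ℤ) - 2 * j - 2)) →
      (j = ℓ → b ≤ Cc ℓ) →
      Real.exp (-(k * c * r ^ 2)) * (b * k ^ (-(j : ℝ))) ≤ D j * (E * K) := by
    intro j hj b hb0 hb1 hb2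
    obtain ⟨hj1, hj2⟩ := Finset.mem_Icc.1 hj
    rcases eq_or_lt_of_le hj2 with heq | hlt
    · -- j = ℓ
      have hbC : b ≤ |Cc ℓ| := le_trans (hb2 heq) (le_abs_self _)
      have hexp : Real.exp (-(k * c * r ^ 2)) ≤ E := by
        rw [hE]; apply Real.exp_le_exp.2; linarith
      have hkj : k ^ (-(j : ℝ)) ≤ K := by
        rw [hK]
        apply Real.rpow_le_rpow_of_exponent_le hk
        have hNr : (N : ℝ) ≤ 2 * ((ℓ : ℝ) + 1) := by exact_mod_cast hm1
        rw [heq]; linarith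
      have hbD : b ≤ D j := by
        rw [hD]
        refine hbC.trans ?_
        rw [heq]
        refine le_mul_of_one_le_right (abs_nonneg _) ?_
        have hF : (0 : ℝ) < (((N : ℤ) - 2 * ℓ - 2).toNat.factorial : ℝ) * Real.exp (1 / 2)
            * c ^ (-((((N : ℤ) - 2 * ℓ - 2).toNat : ℕ) : ℝ) / 2) := by
          have := Real.rpow_pos_of_pos hc (-((((N : ℤ) - 2 * ℓ - 2).toNat : ℕ) : ℝ) / 2)
          positivity
        linarith
      calc Real.exp (-(k * c * r ^ 2)) * (b * k ^ (-(j : ℝ)))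
          ≤ E * (D j * K) := by
            apply mul_le_mul hexp _ (by positivity) hE0.le
            exact mul_le_mul hbD hkj (Real.rpow_pos_of_pos hk0 _).le (le_trans hb0 hbD)
        _ = D j * (E * K) := by ring
    · -- j ≤ ℓ - 1
      have hjl : j ≤ ℓ - 1 := by omega
      set p : ℕ := ((N : ℤ) - 2 * j - 2).toNat with hp
      have hp0 : (0 : ℤ) ≤ (N : ℤ) - 2 * j - 2 := by omega
      have hpz : ((p : ℤ)) = (N : ℤ) - 2 * j - 2 := Int.toNat_of_nonneg hp0
      have hbC : b ≤ |Cc j| * r ^ p := by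
        refine le_trans (hb1 hjl) ?_
        rw [← hpz, zpow_natCast]
        exact mul_le_mul_of_nonneg_right (le_abs_self _) (pow_nonneg hr0 p)
      have hgauss := gauss_decay_full p (mul_pos hk0 hc) hr0
      have hkc : ((k * c) : ℝ) ^ (-(p : ℝ) / 2) = k ^ (-(p : ℝ) / 2) * c ^ (-(p : ℝ) / 2) :=
        Real.mul_rpow hk0.le hc.le
      have hpr : (p : ℝ) = (N : ℝ) - 2 * (j : ℝ) - 2 := by exact_mod_cast hpz
      have hkk : k ^ (-(j : ℝ)) * k ^ (-(p : ℝ) / 2) = K := by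
        rw [hK, ← Real.rpow_add hk0]
        congr 1
        rw [hpr]; ring
      calc Real.exp (-(k * c * r ^ 2)) * (b * k ^ (-(j : ℝ)))
          ≤ Real.exp (-(k * c * r ^ 2)) * ((|Cc j| * r ^ p) * k ^ (-(j : ℝ))) := by
            apply mul_le_mul_of_nonneg_left _ (Real.exp_pos _).le
            exact mul_le_mul_of_nonneg_right hbC (Real.rpow_pos_of_pos hk0 _).le
        _ = (|Cc j| * k ^ (-(j : ℝ))) * (r ^ p * Real.exp (-(k * c * r ^ 2))) := by ring
        _ ≤ (|Cc j| * k ^ (-(j : ℝ))) *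
              ((p.factorial : ℝ) * Real.exp (1 / 2) * (k * c) ^ (-(p : ℝ) / 2)
                * Real.exp (-(k * c * r ^ 2) / 2)) := by
            apply mul_le_mul_of_nonneg_left hgauss
            positivity
        _ = (|Cc j| * ((p.factorial : ℝ) * Real.exp (1 / 2) * c ^ (-(p : ℝ) / 2))) *
              ((k ^ (-(j : ℝ)) * k ^ (-(p : ℝ) / 2)) * Real.exp (-(k * c * r ^ 2) / 2)) := by
            rw [hkc]; ring
        _ = (|Cc j| * ((p.factorial : ℝ) * Real.exp (1 / 2) * c ^ (-(p : ℝ) / 2))) * (K * E) := by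
            rw [hkk, hE]
        _ ≤ D j * (E * K) := by
            rw [show K * E = E * K from mul_comm _ _]
            apply mul_le_mul_of_nonneg_right _ (by positivity)
            rw [hD]
            apply mul_le_mul_of_nonneg_left _ (abs_nonneg _)
            simp only [hp]
            linarith
  -- norms of the exponentials
  have habs_exp : ∀ φ : ℂ, c * r ^ 2 ≤ φ.im →
      ‖Complex.exp (Complex.I * k * φ)‖ ≤ Real.exp (-(k * c * r ^ 2)) := by
    intro φ hφ
    rw [Complex.norm_exp]
    apply Real.exp_le_exp.2
    have hre : (Complex.I * k * φ).re = -(k * φ.im) := by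
      simp [Complex.mul_re, Complex.mul_im]
    rw [hre]
    nlinarith
  -- norm of k^(-j)
  have hknorm : ∀ j : ℤ, ‖(k : ℂ) ^ (-j)‖ = k ^ (-(j : ℝ)) := by
    intro j
    rw [norm_zpow, Complex.norm_of_nonneg hk0.le, ← Real.rpow_intCast]
    congr 1
    push_cast; ring
  have hsum : ∀ q : ℤ → EuclideanSpace ℝ (Fin d) → ℂ,
      ‖∑ j ∈ Finset.Icc (-2 : ℤ) ℓ, q j x * (k : ℂ) ^ (-j)‖ ≤
        ∑ j ∈ Finset.Icc (-2 : ℤ) ℓ, ‖q j x‖ * k ^ (-(j : ℝ)) := by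
    intro q
    refine le_trans (norm_sum_le _ _) (Finset.sum_le_sum fun j hj => ?_)
    rw [norm_mul, hknorm j]
  -- assemble
  have hgoal : Real.exp (-k * c * r ^ 2 / 2) = E := by rw [hE]; congr 1; ring
  rw [hgoal]
  set A := Complex.exp (Complex.I * k * φp x)
  set B := Complex.exp (Complex.I * k * φm x)
  set S1 := ∑ j ∈ Finset.Icc (-2 : ℤ) ℓ, cp j x * (k : ℂ) ^ (-j) with hS1
  set S2 := ∑ j ∈ Finset.Icc (-2 : ℤ) ℓ, cm j x * (k : ℂ) ^ (-j) with hS2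
  have hbound : ∀ (q : ℤ → EuclideanSpace ℝ (Fin d) → ℂ)
      (hq : ∀ j ∈ Finset.Icc (-2 : ℤ) (ℓ - 1), ∀ x ∈ Ω,
        ‖q j x‖ ≤ Cc j * ‖x - γ x‖ ^ ((N : ℤ) - 2 * j - 2))
      (hql : ∀ x ∈ Ω, ‖q ℓ x‖ ≤ Cc ℓ),
      ∑ j ∈ Finset.Icc (-2 : ℤ) ℓ, Real.exp (-(k * c * r ^ 2)) *
        (‖q j x‖ * k ^ (-(j : ℝ))) ≤
      (∑ j ∈ Finset.Icc (-2 : ℤ) ℓ, D j) * (E * K) := by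
    intro q hq hql
    rw [Finset.sum_mul]
    refine Finset.sum_le_sum fun j hj => ?_
    refine key j hj (‖q j x‖) (norm_nonneg _) ?_ ?_
    · intro hjl
      exact hq j (Finset.mem_Icc.2 ⟨(Finset.mem_Icc.1 hj).1, hjl⟩) x hx
    · intro he; rw [he]; exact hql x hx
  calc ‖A * S1 + B * S2‖
      ≤ ‖A‖ * ‖S1‖ + ‖B‖ * ‖S2‖ := by
        refine le_trans (norm_add_le _ _) ?_
        rw [norm_mul, norm_mul]
    _ ≤ Real.exp (-(k * c * r ^ 2)) * (∑ j ∈ Finset.Icc (-2 : ℤ) ℓ, ‖cp j x‖ * k ^ (-(j : ℝ)))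
        + Real.exp (-(k * c * r ^ 2)) * (∑ j ∈ Finset.Icc (-2 : ℤ) ℓ, ‖cm j x‖ * k ^ (-(j : ℝ))) := by
        apply add_le_add
        · exact mul_le_mul (habs_exp _ (hφp x hx)) (hsum cp) (norm_nonneg _) (Real.exp_pos _).le
        · exact mul_le_mul (habs_exp _ (hφm x hx)) (hsum cm) (norm_nonneg _) (Real.exp_pos _).le
    _ = (∑ j ∈ Finset.Icc (-2 : ℤ) ℓ, Real.exp (-(k * c * r ^ 2)) * (‖cp j x‖ * k ^ (-(j : ℝ))))
        + (∑ j ∈ Finset.Icc (-2 : ℤ) ℓ, Real.exp (-(k * c * r ^ 2)) * (‖cm j x‖ * k ^ (-(j : ℝ)))) := by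
        rw [Finset.mul_sum, Finset.mul_sum]
    _ ≤ (∑ j ∈ Finset.Icc (-2 : ℤ) ℓ, D j) * (E * K) + (∑ j ∈ Finset.Icc (-2 : ℤ) ℓ, D j) * (E * K) :=
        add_le_add (hbound cp hcp hcpl) (hbound cm hcm hcml)
    _ = 2 * (∑ j ∈ Finset.Icc (-2 : ℤ) ℓ, D j) * E * K := by ring
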